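/- (Taylor-remainder bound in the proof of Lemma 3.) Let P_i denote the cumulative distribution function of Y_i and define Ū_{2n}(δ) := ∑_{i=1}^n ∫_0^{x_iᵀδ/√n} ( P_i(x_iᵀβ₀+s) − P_i(x_iᵀβ₀) ) ds for δ∈ℝ^p (signed integrals). Suppose ‖x_i‖≤M for all i and there exist C,η,r₀>0 with |p_i(x_iᵀβ₀+r) − p_i(x_iᵀβ₀)| ≤ C|r|^η for all |r|≤r₀ and all i. Then for every δ∈ℝ^p and every n with M‖δ‖/√n ≤ r₀, | Ū_{2n}(δ) − (1/(2n))∑_{i=1}^n p_i(x_iᵀβ₀)(x_iᵀδ)² | ≤ C·( max_{1≤i≤n} |x_iᵀδ|/√n )^η · (1/n)∑_{i=1}^n (x_iᵀδ)². In particular, for every compact K⊂ℝ^p, sup_{δ∈K} | Ū_{2n}(δ) − (1/(2n))∑_{i=1}^n p_i(x_iᵀβ₀)(x_iᵀδ)² | → 0 as n→∞. -/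

import Mathlib

open MeasureTheory Filter Real intervalIntegral
open scoped RealInnerProductSpace BigOperators

noncomputable section

lemma comp_add_intervalIntegrable {f : ℝ → ℝ} (hf : Integrable f) (b a₁ a₂ : ℝ) :
    IntervalIntegrable (fun u => f (b + u)) volume a₁ a₂ := by
  have h := (hf.intervalIntegrable (a := b + a₁) (b := b + a₂)).comp_add_left b
  simpa using h


lemma abs_le_abs_of_mem_uIoc {u s : ℝ} (h : u ∈ Set.uIoc 0 s) : |u| ≤ |s| := by
  rcases Set.mem_uIoc.mp h with ⟨h1, h2⟩ | ⟨h1, h2⟩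
  · rw [abs_of_pos h1, abs_of_nonneg (h1.le.trans h2)]; exact h2
  · rw [abs_of_nonpos h2, abs_of_neg (h1.trans_le h2)]; exact neg_le_neg h1.le

lemma key_bound {f : ℝ → ℝ} (hf : Integrable f) (b a C η : ℝ) (hC : 0 < C) (hη : 0 < η)
    (hH : ∀ u : ℝ, |u| ≤ |a| → |f (b + u) - f b| ≤ C * |u| ^ η) :
    |(∫ s in (0:ℝ)..a, ((∫ y in Set.Iic (b + s), f y) - ∫ y in Set.Iic b, f y)) -
      f b * a ^ 2 / 2| ≤ C * |a| ^ η * a ^ 2 := by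
  -- rewrite inner difference as interval integral
  have h1 : ∀ s : ℝ, ((∫ y in Set.Iic (b + s), f y) - ∫ y in Set.Iic b, f y)
      = ∫ u in (0:ℝ)..s, f (b + u) := by
    intro s
    rw [integral_Iic_sub_Iic hf.integrableOn hf.integrableOn]
    rw [intervalIntegral.integral_comp_add_left (fun y => f y) b]
    simp
  have h2 : (∫ s in (0:ℝ)..a, ((∫ y in Set.Iic (b + s), f y) - ∫ y in Set.Iic b, f y))
      = ∫ s in (0:ℝ)..a, (∫ u in (0:ℝ)..s, f (b + u)) := by
    congr 1; funext s; exact h1 s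
  rw [h2]
  have hconst : (∫ s in (0:ℝ)..a, f b * s) = f b * a ^ 2 / 2 := by
    rw [intervalIntegral.integral_const_mul, integral_id]; ring
  have hint1 : IntervalIntegrable (fun s => ∫ u in (0:ℝ)..s, f (b + u)) volume 0 a := by
    apply Continuous.intervalIntegrable
    exact intervalIntegral.continuous_primitive (fun a₁ a₂ => comp_add_intervalIntegrable hf b a₁ a₂) 0
  have hint2 : IntervalIntegrable (fun s => f b * s) volume 0 a :=
    (continuous_const.mul continuous_id).intervalIntegrable 0 a
  have hsub : (∫ s in (0:ℝ)..a, (∫ u in (0:ℝ)..s, f (b + u))) - f b * a ^ 2 / 2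
      = ∫ s in (0:ℝ)..a, ((∫ u in (0:ℝ)..s, f (b + u)) - f b * s) := by
    rw [intervalIntegral.integral_sub hint1 hint2, hconst]
  rw [hsub]
  have hbnd : ∀ s ∈ Set.uIoc (0:ℝ) a,
      ‖(∫ u in (0:ℝ)..s, f (b + u)) - f b * s‖ ≤ (C * |a| ^ η) * |a| := by
    intro s hs
    have hs' : |s| ≤ |a| := abs_le_abs_of_mem_uIoc hs
    have heq : (∫ u in (0:ℝ)..s, f (b + u)) - f b * s
        = ∫ u in (0:ℝ)..s, (f (b + u) - f b) := by
      rw [intervalIntegral.integral_sub (comp_add_intervalIntegrable hf b 0 s)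
        (intervalIntegrable_const)]
      simp [mul_comm]
    rw [heq]
    calc ‖∫ u in (0:ℝ)..s, (f (b + u) - f b)‖
        ≤ (C * |a| ^ η) * |s - 0| := by
          apply intervalIntegral.norm_integral_le_of_norm_le_const
          intro u hu
          have hu' : |u| ≤ |s| := abs_le_abs_of_mem_uIoc hu
          have := hH u (hu'.trans hs')
          calc ‖f (b + u) - f b‖ ≤ C * |u| ^ η := this
            _ ≤ C * |a| ^ η :=
                mul_le_mul_of_nonneg_left
                  (Real.rpow_le_rpow (abs_nonneg _) (hu'.trans hs') hη.le) hC.le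
      _ ≤ (C * |a| ^ η) * |a| := by
          rw [sub_zero]
          exact mul_le_mul_of_nonneg_left hs' (by positivity)
  calc |∫ s in (0:ℝ)..a, ((∫ u in (0:ℝ)..s, f (b + u)) - f b * s)|
      ≤ ((C * |a| ^ η) * |a|) * |a - 0| :=
        intervalIntegral.norm_integral_le_of_norm_le_const hbnd
    _ = C * |a| ^ η * a ^ 2 := by rw [sub_zero]; rw [← sq_abs]; ring


/-- **Taylor-remainder bound in the proof of Lemma 3.**
With `P_i(t) = ∫_{-∞}^t p_i` the CDF of `Y_i` and
`Ū_{2n}(δ) = ∑_{i<n} ∫_0^{xᵢᵀδ/√n} (P_i(xᵢᵀβ₀+s) - P_i(xᵢᵀβ₀)) ds`, if `‖xᵢ‖ ≤ M` and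
`|p_i(xᵢᵀβ₀+r) - p_i(xᵢᵀβ₀)| ≤ C|r|^η` for `|r| ≤ r₀`, then the stated quadratic
approximation bound holds, and the approximation is uniform on compacts. -/
theorem taylor_remainder_bound_lemma3
    (p : ℕ) (τ : ℝ) (hτ : τ ∈ Set.Ioo (0:ℝ) 1)
    (pd : ℕ → ℝ → ℝ) (hpd0 : ∀ i y, 0 ≤ pd i y)
    (hpdint : ∀ i, Integrable (pd i)) (hpd1 : ∀ i, (∫ y : ℝ, pd i y) = 1)
    (x : ℕ → EuclideanSpace ℝ (Fin p)) (β₀ : EuclideanSpace ℝ (Fin p))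
    (hquant : ∀ i, (∫ y in Set.Iic (⟪x i, β₀⟫), pd i y) = τ)
    (M : ℝ) (hx : ∀ i, ‖x i‖ ≤ M)
    (C η r₀ : ℝ) (hC : 0 < C) (hη : 0 < η) (hr₀ : 0 < r₀)
    (hHolder : ∀ i, ∀ r : ℝ, |r| ≤ r₀ →
      |pd i (⟪x i, β₀⟫ + r) - pd i ⟪x i, β₀⟫| ≤ C * |r| ^ η) :
    (∀ δ : EuclideanSpace ℝ (Fin p), ∀ n : ℕ, ∀ hn : 0 < n,
      M * ‖δ‖ / Real.sqrt n ≤ r₀ →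
      |(∑ i ∈ Finset.range n,
          ∫ s in (0:ℝ)..(⟪x i, δ⟫ / Real.sqrt n),
            ((∫ y in Set.Iic (⟪x i, β₀⟫ + s), pd i y) - ∫ y in Set.Iic (⟪x i, β₀⟫), pd i y)) -
        (2 * (n:ℝ))⁻¹ * ∑ i ∈ Finset.range n, pd i ⟪x i, β₀⟫ * ⟪x i, δ⟫ ^ 2| ≤
      C * ((Finset.range n).sup' (Finset.nonempty_range_iff.mpr hn.ne')
            (fun i => |⟪x i, δ⟫| / Real.sqrt n)) ^ η *
          ((n:ℝ)⁻¹ * ∑ i ∈ Finset.range n, ⟪x i, δ⟫ ^ 2)) ∧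
    (∀ K : Set (EuclideanSpace ℝ (Fin p)), IsCompact K →
      Tendsto (fun n : ℕ => ⨆ δ ∈ K,
        |(∑ i ∈ Finset.range n,
            ∫ s in (0:ℝ)..(⟪x i, δ⟫ / Real.sqrt n),
              ((∫ y in Set.Iic (⟪x i, β₀⟫ + s), pd i y) - ∫ y in Set.Iic (⟪x i, β₀⟫), pd i y)) -
          (2 * (n:ℝ))⁻¹ * ∑ i ∈ Finset.range n, pd i ⟪x i, β₀⟫ * ⟪x i, δ⟫ ^ 2|)
        atTop (nhds 0)) := by
  have hM : 0 ≤ M := le_trans (norm_nonneg (x 0)) (hx 0)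
  have part1 : ∀ δ : EuclideanSpace ℝ (Fin p), ∀ n : ℕ, ∀ hn : 0 < n,
      M * ‖δ‖ / Real.sqrt n ≤ r₀ →
      |(∑ i ∈ Finset.range n,
          ∫ s in (0:ℝ)..(⟪x i, δ⟫ / Real.sqrt n),
            ((∫ y in Set.Iic (⟪x i, β₀⟫ + s), pd i y) - ∫ y in Set.Iic (⟪x i, β₀⟫), pd i y)) -
        (2 * (n:ℝ))⁻¹ * ∑ i ∈ Finset.range n, pd i ⟪x i, β₀⟫ * ⟪x i, δ⟫ ^ 2| ≤
      C * ((Finset.range n).sup' (Finset.nonempty_range_iff.mpr hn.ne')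
            (fun i => |⟪x i, δ⟫| / Real.sqrt n)) ^ η *
          ((n:ℝ)⁻¹ * ∑ i ∈ Finset.range n, ⟪x i, δ⟫ ^ 2) := by
    intro δ n hn hle
    have hn' : (0:ℝ) < n := Nat.cast_pos.mpr hn
    have hsq : (0:ℝ) < Real.sqrt n := Real.sqrt_pos.mpr hn'
    set S := (Finset.range n).sup' (Finset.nonempty_range_iff.mpr hn.ne')
        (fun i => |⟪x i, δ⟫| / Real.sqrt n) with hSdef
    have hSnn : 0 ≤ S := le_trans (by positivity : (0:ℝ) ≤ |⟪x 0, δ⟫| / Real.sqrt n)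
      (Finset.le_sup' (fun i => |⟪x i, δ⟫| / Real.sqrt n) (Finset.mem_range.mpr hn))
    have habs : ∀ i, |⟪x i, δ⟫ / Real.sqrt n| = |⟪x i, δ⟫| / Real.sqrt n := by
      intro i; rw [abs_div, abs_of_pos hsq]
    have hterm : ∀ i ∈ Finset.range n,
        |(∫ s in (0:ℝ)..(⟪x i, δ⟫ / Real.sqrt n),
            ((∫ y in Set.Iic (⟪x i, β₀⟫ + s), pd i y) - ∫ y in Set.Iic (⟪x i, β₀⟫), pd i y)) -
          (2 * (n:ℝ))⁻¹ * (pd i ⟪x i, β₀⟫ * ⟪x i, δ⟫ ^ 2)| ≤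
        C * S ^ η * (⟪x i, δ⟫ ^ 2 / n) := by
      intro i hi
      set a := ⟪x i, δ⟫ / Real.sqrt n with ha
      have ha2 : a ^ 2 = ⟪x i, δ⟫ ^ 2 / n := by
        rw [ha, div_pow, Real.sq_sqrt hn'.le]
      have haS : |a| ≤ S := by
        rw [ha, habs i]; exact Finset.le_sup' (fun i => |⟪x i, δ⟫| / Real.sqrt n) hi
      have har₀ : |a| ≤ r₀ := by
        refine le_trans ?_ hle
        rw [ha, habs i]
        exact div_le_div_of_nonneg_right ((abs_real_inner_le_norm (x i) δ).trans
          (mul_le_mul_of_nonneg_right (hx i) (norm_nonneg δ))) hsq.le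
      have hc : (2 * (n:ℝ))⁻¹ * (pd i ⟪x i, β₀⟫ * ⟪x i, δ⟫ ^ 2)
          = pd i ⟪x i, β₀⟫ * a ^ 2 / 2 := by
        rw [ha2]; ring
      rw [hc]
      calc |(∫ s in (0:ℝ)..a,
            ((∫ y in Set.Iic (⟪x i, β₀⟫ + s), pd i y) - ∫ y in Set.Iic (⟪x i, β₀⟫), pd i y)) -
            pd i ⟪x i, β₀⟫ * a ^ 2 / 2| ≤ C * |a| ^ η * a ^ 2 := by
            apply key_bound (hpdint i) _ _ _ _ hC hη
            intro u hu
            exact hHolder i u (hu.trans har₀)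
        _ ≤ C * S ^ η * (⟪x i, δ⟫ ^ 2 / n) := by
            rw [← ha2]
            have : |a| ^ η ≤ S ^ η := Real.rpow_le_rpow (abs_nonneg _) haS hη.le
            have h2 : (0:ℝ) ≤ a ^ 2 := sq_nonneg a
            exact mul_le_mul_of_nonneg_right
              (mul_le_mul_of_nonneg_left this hC.le) h2
    calc |(∑ i ∈ Finset.range n,
          ∫ s in (0:ℝ)..(⟪x i, δ⟫ / Real.sqrt n),
            ((∫ y in Set.Iic (⟪x i, β₀⟫ + s), pd i y) - ∫ y in Set.Iic (⟪x i, β₀⟫), pd i y)) -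
        (2 * (n:ℝ))⁻¹ * ∑ i ∈ Finset.range n, pd i ⟪x i, β₀⟫ * ⟪x i, δ⟫ ^ 2|
        = |∑ i ∈ Finset.range n,
            ((∫ s in (0:ℝ)..(⟪x i, δ⟫ / Real.sqrt n),
              ((∫ y in Set.Iic (⟪x i, β₀⟫ + s), pd i y) - ∫ y in Set.Iic (⟪x i, β₀⟫), pd i y)) -
             (2 * (n:ℝ))⁻¹ * (pd i ⟪x i, β₀⟫ * ⟪x i, δ⟫ ^ 2))| := by
          rw [Finset.sum_sub_distrib, Finset.mul_sum]
      _ ≤ ∑ i ∈ Finset.range n,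
            |(∫ s in (0:ℝ)..(⟪x i, δ⟫ / Real.sqrt n),
              ((∫ y in Set.Iic (⟪x i, β₀⟫ + s), pd i y) - ∫ y in Set.Iic (⟪x i, β₀⟫), pd i y)) -
             (2 * (n:ℝ))⁻¹ * (pd i ⟪x i, β₀⟫ * ⟪x i, δ⟫ ^ 2)| :=
          Finset.abs_sum_le_sum_abs _ _
      _ ≤ ∑ i ∈ Finset.range n, C * S ^ η * (⟪x i, δ⟫ ^ 2 / n) := Finset.sum_le_sum hterm
      _ = C * S ^ η * ((n:ℝ)⁻¹ * ∑ i ∈ Finset.range n, ⟪x i, δ⟫ ^ 2) := by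
          rw [← Finset.mul_sum, ← Finset.sum_div]
          ring
  refine ⟨part1, ?_⟩
  intro K hK
  obtain ⟨R, hR⟩ := hK.isBounded.subset_closedBall 0
  have hR0 : K ⊆ Metric.closedBall 0 (max R 0) :=
    hR.trans (Metric.closedBall_subset_closedBall (le_max_left _ _))
  set R' := max R 0 with hR'def
  have hR' : 0 ≤ R' := le_max_right _ _
  have hMR : 0 ≤ M * R' := mul_nonneg hM hR'
  -- the upper bound sequence
  set B : ℕ → ℝ := fun n => C * (M * R' / Real.sqrt n) ^ η * (M * R') ^ 2 with hBdef
  have hBnn : ∀ n, 0 ≤ B n := by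
    intro n
    have : (0:ℝ) ≤ (M * R' / Real.sqrt n) ^ η :=
      Real.rpow_nonneg (div_nonneg hMR (Real.sqrt_nonneg _)) _
    positivity
  have hsqrtTop : Tendsto (fun n : ℕ => Real.sqrt n) atTop atTop := by
    apply Filter.tendsto_atTop_atTop.mpr
    intro b
    refine ⟨⌈b ^ 2⌉₊, fun n hn => Real.le_sqrt_of_sq_le ?_⟩
    calc b ^ 2 ≤ (⌈b ^ 2⌉₊ : ℝ) := Nat.le_ceil _
      _ ≤ (n : ℝ) := Nat.cast_le.mpr hn
  have hdiv : Tendsto (fun n : ℕ => M * R' / Real.sqrt n) atTop (nhds 0) :=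
    Filter.Tendsto.div_atTop tendsto_const_nhds hsqrtTop
  have hpow : Tendsto (fun n : ℕ => (M * R' / Real.sqrt n) ^ η) atTop (nhds 0) := by
    have hc : ContinuousAt (fun z : ℝ => z ^ η) 0 :=
      Real.continuousAt_rpow_const 0 η (Or.inr hη.le)
    have := hc.tendsto.comp hdiv
    rwa [Real.zero_rpow hη.ne'] at this
  have hB : Tendsto B atTop (nhds 0) := by
    have := (hpow.const_mul C).mul_const ((M * R') ^ 2)
    simpa using this
  -- choose N
  set N : ℕ := max 1 ⌈(M * R' / r₀) ^ 2⌉₊ with hNdef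
  have hbound : ∀ n : ℕ, n ≥ N → (⨆ δ ∈ K,
      |(∑ i ∈ Finset.range n,
          ∫ s in (0:ℝ)..(⟪x i, δ⟫ / Real.sqrt n),
            ((∫ y in Set.Iic (⟪x i, β₀⟫ + s), pd i y) - ∫ y in Set.Iic (⟪x i, β₀⟫), pd i y)) -
        (2 * (n:ℝ))⁻¹ * ∑ i ∈ Finset.range n, pd i ⟪x i, β₀⟫ * ⟪x i, δ⟫ ^ 2|) ≤ B n := by
    intro n hnN
    have hn : 0 < n := lt_of_lt_of_le Nat.one_pos (le_trans (le_max_left _ _) hnN)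
    have hn' : (0:ℝ) < n := Nat.cast_pos.mpr hn
    have hsq : (0:ℝ) < Real.sqrt n := Real.sqrt_pos.mpr hn'
    have hsqn : M * R' / r₀ ≤ Real.sqrt n := by
      apply Real.le_sqrt_of_sq_le
      calc (M * R' / r₀) ^ 2 ≤ (⌈(M * R' / r₀) ^ 2⌉₊ : ℝ) := Nat.le_ceil _
        _ ≤ (N : ℝ) := Nat.cast_le.mpr (le_max_right _ _)
        _ ≤ (n : ℝ) := Nat.cast_le.mpr hnN
    have hMRn : M * R' / Real.sqrt n ≤ r₀ := by
      rw [div_le_iff₀ hsq]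
      calc M * R' = (M * R' / r₀) * r₀ := by field_simp
        _ ≤ Real.sqrt n * r₀ := by gcongr
        _ = r₀ * Real.sqrt n := mul_comm _ _
    apply Real.iSup_le _ (hBnn n)
    intro δ
    apply Real.iSup_le _ (hBnn n)
    intro hδK
    have hδR : ‖δ‖ ≤ R' := by
      have := hR0 hδK
      rwa [Metric.mem_closedBall, dist_zero_right] at this
    have hle : M * ‖δ‖ / Real.sqrt n ≤ r₀ := by
      refine le_trans ?_ hMRn
      gcongr
    have hinner : ∀ i, |⟪x i, δ⟫| ≤ M * R' := by
      intro i
      calc |⟪x i, δ⟫| ≤ ‖x i‖ * ‖δ‖ := abs_real_inner_le_norm (x i) δ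
        _ ≤ M * R' := mul_le_mul (hx i) hδR (norm_nonneg δ) hM
    calc |(∑ i ∈ Finset.range n,
          ∫ s in (0:ℝ)..(⟪x i, δ⟫ / Real.sqrt n),
            ((∫ y in Set.Iic (⟪x i, β₀⟫ + s), pd i y) - ∫ y in Set.Iic (⟪x i, β₀⟫), pd i y)) -
        (2 * (n:ℝ))⁻¹ * ∑ i ∈ Finset.range n, pd i ⟪x i, β₀⟫ * ⟪x i, δ⟫ ^ 2|
        ≤ C * ((Finset.range n).sup' (Finset.nonempty_range_iff.mpr hn.ne')
            (fun i => |⟪x i, δ⟫| / Real.sqrt n)) ^ η *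
          ((n:ℝ)⁻¹ * ∑ i ∈ Finset.range n, ⟪x i, δ⟫ ^ 2) := part1 δ n hn hle
      _ ≤ B n := by
          have hSle : (Finset.range n).sup' (Finset.nonempty_range_iff.mpr hn.ne')
              (fun i => |⟪x i, δ⟫| / Real.sqrt n) ≤ M * R' / Real.sqrt n := by
            apply Finset.sup'_le
            intro i _
            gcongr
            exact hinner i
          have hSnn : 0 ≤ (Finset.range n).sup' (Finset.nonempty_range_iff.mpr hn.ne')
              (fun i => |⟪x i, δ⟫| / Real.sqrt n) :=
            le_trans (by positivity : (0:ℝ) ≤ |⟪x 0, δ⟫| / Real.sqrt n)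
              (Finset.le_sup' (fun i => |⟪x i, δ⟫| / Real.sqrt n) (Finset.mem_range.mpr hn))
          have hsum : (n:ℝ)⁻¹ * ∑ i ∈ Finset.range n, ⟪x i, δ⟫ ^ 2 ≤ (M * R') ^ 2 := by
            calc (n:ℝ)⁻¹ * ∑ i ∈ Finset.range n, ⟪x i, δ⟫ ^ 2
                ≤ (n:ℝ)⁻¹ * ∑ i ∈ Finset.range n, (M * R') ^ 2 := by
                  apply mul_le_mul_of_nonneg_left _ (by positivity)
                  apply Finset.sum_le_sum
                  intro i _
                  rw [← sq_abs]
                  exact pow_le_pow_left₀ (abs_nonneg _) (hinner i) 2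
              _ = (M * R') ^ 2 := by
                  rw [Finset.sum_const, Finset.card_range, nsmul_eq_mul]
                  field_simp
          rw [hBdef]
          have h1 : ((Finset.range n).sup' (Finset.nonempty_range_iff.mpr hn.ne')
              (fun i => |⟪x i, δ⟫| / Real.sqrt n)) ^ η ≤ (M * R' / Real.sqrt n) ^ η :=
            Real.rpow_le_rpow hSnn hSle hη.le
          have hsumnn : (0:ℝ) ≤ (n:ℝ)⁻¹ * ∑ i ∈ Finset.range n, ⟪x i, δ⟫ ^ 2 := by
            apply mul_nonneg (by positivity)
            exact Finset.sum_nonneg fun i _ => sq_nonneg _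
          calc C * ((Finset.range n).sup' (Finset.nonempty_range_iff.mpr hn.ne')
                (fun i => |⟪x i, δ⟫| / Real.sqrt n)) ^ η *
              ((n:ℝ)⁻¹ * ∑ i ∈ Finset.range n, ⟪x i, δ⟫ ^ 2)
              ≤ C * (M * R' / Real.sqrt n) ^ η *
                ((n:ℝ)⁻¹ * ∑ i ∈ Finset.range n, ⟪x i, δ⟫ ^ 2) :=
                mul_le_mul_of_nonneg_right (mul_le_mul_of_nonneg_left h1 hC.le) hsumnn
            _ ≤ C * (M * R' / Real.sqrt n) ^ η * (M * R') ^ 2 := by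
                apply mul_le_mul_of_nonneg_left hsum
                apply mul_nonneg hC.le
                exact Real.rpow_nonneg (div_nonneg hMR (Real.sqrt_nonneg _)) _
  have hlow : ∀ n : ℕ, (0:ℝ) ≤ ⨆ δ ∈ K,
      |(∑ i ∈ Finset.range n,
          ∫ s in (0:ℝ)..(⟪x i, δ⟫ / Real.sqrt n),
            ((∫ y in Set.Iic (⟪x i, β₀⟫ + s), pd i y) - ∫ y in Set.Iic (⟪x i, β₀⟫), pd i y)) -
        (2 * (n:ℝ))⁻¹ * ∑ i ∈ Finset.range n, pd i ⟪x i, β₀⟫ * ⟪x i, δ⟫ ^ 2| := by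
    intro n
    apply Real.iSup_nonneg
    intro δ
    apply Real.iSup_nonneg
    intro _
    exact abs_nonneg _
  refine tendsto_of_tendsto_of_tendsto_of_le_of_le' tendsto_const_nhds hB
    (Filter.Eventually.of_forall hlow) ?_
  filter_upwards [Filter.eventually_ge_atTop N] with n hn
  exact hbound n hn
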